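/- (Zarankiewicz) If (X,d) is a separable metric space, then every sequence {C_n} of closed subsets of X admits a subsequence that converges in the Kuratowski sense to some closed set C ⊆ X. -/

import Mathlib

open Filter EMetric ENNReal Topology

/-- Kuratowski limit inferior: points `q` with `limsup_n d(q, C_n) = 0` (d(q,∅)=+∞). -/
def kurLi {X : Type*} [MetricSpace X] (C : ℕ → Set X) : Set X :=
  {q | Filter.limsup (fun n => EMetric.infEdist q (C n)) Filter.atTop = 0}

/-- Kuratowski limit superior: points `q` with `liminf_n d(q, C_n) = 0` (d(q,∅)=+∞). -/
def kurLs {X : Type*} [MetricSpace X] (C : ℕ → Set X) : Set X :=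
  {q | Filter.liminf (fun n => EMetric.infEdist q (C n)) Filter.atTop = 0}

lemma kurLi_isClosed {X : Type*} [MetricSpace X] (C : ℕ → Set X) : IsClosed (kurLi C) := by
  rw [← closure_subset_iff_isClosed]
  intro q hq
  show limsup (fun n => infEdist q (C n)) atTop = 0
  refine le_antisymm ?_ zero_le
  refine ENNReal.le_of_forall_pos_le_add fun ε hε _ => ?_
  rw [zero_add]
  have hε2 : (0:ℝ≥0∞) < ε / 2 := ENNReal.div_pos (by exact_mod_cast hε.ne') (by norm_num)
  obtain ⟨p, hp, hqp⟩ := EMetric.mem_closure_iff.mp hq (ε / 2) hε2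
  have h1 : limsup (fun n => infEdist p (C n)) atTop = 0 := hp
  have hp0 : Tendsto (fun n => infEdist p (C n)) atTop (𝓝 0) := by
    refine tendsto_of_liminf_eq_limsup ?_ h1
    exact le_antisymm (h1 ▸ liminf_le_limsup) zero_le
  have hev : ∀ᶠ n in atTop, infEdist p (C n) < ε / 2 := hp0.eventually_lt_const hε2
  refine limsup_le_of_le (by isBoundedDefault) ?_
  filter_upwards [hev] with n hn
  calc infEdist q (C n) ≤ infEdist p (C n) + edist q p := infEdist_le_infEdist_add_edist
    _ ≤ ε / 2 + ε / 2 := add_le_add hn.le hqp.le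
    _ = ε := ENNReal.add_halves _

/-- (Zarankiewicz) In a separable metric space, every sequence of closed sets has a
subsequence converging in the Kuratowski sense to a closed set. -/
theorem statement7 {X : Type*} [MetricSpace X] [TopologicalSpace.SeparableSpace X]
    (C : ℕ → Set X) (hC : ∀ n, IsClosed (C n)) :
    ∃ φ : ℕ → ℕ, StrictMono φ ∧ ∃ D : Set X, IsClosed D ∧
      kurLi (fun k => C (φ k)) = D ∧ kurLs (fun k => C (φ k)) = D := by
  rcases isEmpty_or_nonempty X with h | h
  · exact ⟨id, strictMono_id, ∅, isClosed_empty,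
      Set.eq_empty_of_isEmpty _, Set.eq_empty_of_isEmpty _⟩
  · set u : ℕ → X := TopologicalSpace.denseSeq X with hu_def
    have hu : DenseRange u := TopologicalSpace.denseRange_denseSeq X
    obtain ⟨L, -, φ, hφ, hL⟩ :=
      isCompact_univ.tendsto_subseq (x := fun n (i : ℕ) => infEdist (u i) (C n))
        (fun n => Set.mem_univ _)
    have hLi : ∀ i, Tendsto (fun k => infEdist (u i) (C (φ k))) atTop (𝓝 (L i)) :=
      fun i => tendsto_pi_nhds.mp hL i
    refine ⟨φ, hφ, kurLi (fun k => C (φ k)), kurLi_isClosed _, rfl, ?_⟩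
    apply Set.Subset.antisymm
    · -- kurLs ⊆ kurLi
      intro q hq
      have hq' : liminf (fun k => infEdist q (C (φ k))) atTop = 0 := hq
      show limsup (fun k => infEdist q (C (φ k))) atTop = 0
      refine le_antisymm ?_ zero_le
      refine ENNReal.le_of_forall_pos_le_add fun ε hε _ => ?_
      rw [zero_add]
      set δ : ℝ≥0∞ := ε / 4 with hδ
      have hδ0 : 0 < δ := ENNReal.div_pos (by exact_mod_cast hε.ne') (by norm_num)
      have hδt : δ ≠ ⊤ := (ENNReal.div_lt_top ENNReal.coe_ne_top (by norm_num)).ne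
      obtain ⟨i, hi⟩ : ∃ i, edist q (u i) < δ := by
        obtain ⟨p, ⟨i, rfl⟩, hlt⟩ := EMetric.mem_closure_iff.mp (hu q) δ hδ0
        exact ⟨i, hlt⟩
      have hfreq : ∃ᶠ k in atTop, infEdist q (C (φ k)) < δ :=
        frequently_lt_of_liminf_lt (by isBoundedDefault) (by rw [hq']; exact hδ0)
      have hfreq2 : ∃ᶠ k in atTop, infEdist (u i) (C (φ k)) ≤ δ + δ := by
        refine hfreq.mono fun k hk => ?_
        calc infEdist (u i) (C (φ k)) ≤ infEdist q (C (φ k)) + edist (u i) q :=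
              infEdist_le_infEdist_add_edist
          _ ≤ δ + δ := add_le_add hk.le (by rw [edist_comm]; exact hi.le)
      have hLle : L i ≤ δ + δ := by
        rw [← (hLi i).liminf_eq]
        exact liminf_le_of_frequently_le hfreq2
      have hev : ∀ᶠ k in atTop, infEdist (u i) (C (φ k)) < δ + δ + δ :=
        (hLi i).eventually_lt_const (lt_of_le_of_lt hLle
          (ENNReal.lt_add_right (ENNReal.add_ne_top.mpr ⟨hδt, hδt⟩) hδ0.ne'))
      refine limsup_le_of_le (by isBoundedDefault) ?_
      filter_upwards [hev] with k hk
      calc infEdist q (C (φ k)) ≤ infEdist (u i) (C (φ k)) + edist q (u i) :=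
            infEdist_le_infEdist_add_edist
        _ ≤ δ + δ + δ + δ := add_le_add hk.le hi.le
        _ = 4 * δ := by ring
        _ = ε := ENNReal.mul_div_cancel (by norm_num) (by norm_num)
    · -- kurLi ⊆ kurLs
      intro q hq
      have hq' : limsup (fun k => infEdist q (C (φ k))) atTop = 0 := hq
      show liminf (fun k => infEdist q (C (φ k))) atTop = 0
      exact le_antisymm (hq' ▸ liminf_le_limsup) zero_le
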